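/- Let g = f/K satisfy ∇g(x,s)·x ≥ c|x|² for all |x| > R̄ and s ∈ S, with c > 0. Let ρ_ε be a probability density on B_R × S (R > R̄) satisfying ∫∫ (∇g · x) ρ_ε dx dμ(s) + ε ∫∫ ∇ρ_ε · x dx dμ(s) = 0 together with the integration-by-parts identity ∫∫ ∇ρ_ε · x dx dμ(s) ≥ −d. Then the second moment satisfies m₂(ρ_ε) := ∫∫ |x|² ρ_ε dx dμ(s) ≤ (R̄ G_{R̄} + c R̄² + d)/c, where G_{R̄} := sup_{(x,s)∈B_{R̄}×S} |∇g(x,s)|; in particular the bound is independent of R and ε. -/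

import Mathlib

open MeasureTheory RealInnerProductSpace

/-- Uniform second-moment bound for the diffusive stationary approximation: if
`∇g·x ≥ c|x|²` for `|x| > R̄`, `|∇g| ≤ G` on `B_R̄`, the probability measure
`ρ_ε` lives on `B_R × S` and satisfies `∫∫ (∇g·x) dρ_ε + ε I = 0` with the
integration-by-parts bound `I ≥ -d`, then `m₂(ρ_ε) ≤ (R̄ G + c R̄² + d)/c`,
independently of `R` and `ε`. -/
theorem stmt_7 {d n : ℕ} (c Rbar R G ε : ℝ)
    (hc : 0 < c) (hRbar : 0 < Rbar) (hR : Rbar < R) (hG : 0 ≤ G)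
    (hε : 0 < ε) (hε1 : ε ≤ 1)
    (gradg : EuclideanSpace ℝ (Fin d) → EuclideanSpace ℝ (Fin n) → EuclideanSpace ℝ (Fin d))
    (hconf : ∀ (x : EuclideanSpace ℝ (Fin d)) (s : EuclideanSpace ℝ (Fin n)),
      Rbar < ‖x‖ → c * ‖x‖ ^ 2 ≤ ⟪gradg x s, x⟫)
    (hGbound : ∀ (x : EuclideanSpace ℝ (Fin d)) (s : EuclideanSpace ℝ (Fin n)),
      ‖x‖ ≤ Rbar → ‖gradg x s‖ ≤ G)
    (ρ : Measure (EuclideanSpace ℝ (Fin d) × EuclideanSpace ℝ (Fin n)))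
    [IsProbabilityMeasure ρ]
    (hsupp : ρ ((Metric.closedBall (0 : EuclideanSpace ℝ (Fin d)) R ×ˢ Set.univ)ᶜ) = 0)
    (hint1 : Integrable (fun p => ⟪gradg p.1 p.2, p.1⟫) ρ)
    (hint2 : Integrable (fun p => ‖p.1‖ ^ 2) ρ)
    (I : ℝ) (hI : -(d : ℝ) ≤ I)
    (heq : (∫ p, ⟪gradg p.1 p.2, p.1⟫ ∂ρ) + ε * I = 0) :
    ∫ p, ‖p.1‖ ^ 2 ∂ρ ≤ (Rbar * G + c * Rbar ^ 2 + d) / c := by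
  have key : ∀ p : EuclideanSpace ℝ (Fin d) × EuclideanSpace ℝ (Fin n),
      c * ‖p.1‖ ^ 2 ≤ ⟪gradg p.1 p.2, p.1⟫ + (Rbar * G + c * Rbar ^ 2) := by
    intro p
    by_cases h : Rbar < ‖p.1‖
    · have h1 := hconf p.1 p.2 h
      nlinarith [mul_nonneg hRbar.le hG, mul_nonneg hc.le (sq_nonneg Rbar)]
    · push_neg at h
      have hg := hGbound p.1 p.2 h
      have hip : |⟪gradg p.1 p.2, p.1⟫| ≤ ‖gradg p.1 p.2‖ * ‖p.1‖ :=
        abs_real_inner_le_norm _ _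
      have hnn : (0:ℝ) ≤ ‖p.1‖ := norm_nonneg _
      have := neg_abs_le ⟪gradg p.1 p.2, p.1⟫
      nlinarith [norm_nonneg (gradg p.1 p.2), mul_le_mul hg h hnn hG,
        mul_le_mul_of_nonneg_left (mul_le_mul h h hnn hRbar.le) hc.le]
  have hmono : ∫ p, c * ‖p.1‖ ^ 2 ∂ρ ≤
      ∫ p, (⟪gradg p.1 p.2, p.1⟫ + (Rbar * G + c * Rbar ^ 2)) ∂ρ :=
    integral_mono (hint2.const_mul c) (hint1.add (integrable_const _)) key
  rw [integral_const_mul, integral_add hint1 (integrable_const _),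
    integral_const, probReal_univ, one_smul] at hmono
  have hIle : ε * I ≥ -(ε * d) := by nlinarith
  have hεd : ε * d ≤ d := by nlinarith [Nat.cast_nonneg (α := ℝ) d]
  rw [le_div_iff₀ hc]
  nlinarith
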